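/- Let S be a one-dimensional Cohen-Macaulay homogeneous graded ring over a field k with minimal multiplicity, which is not Gorenstein, f a homogeneous non-zerodivisor of degree 2, and R = S/fS. Then there exists a nonfree finitely generated R-module of G-dimension zero. -/

import Mathlib

open CategoryTheory

noncomputable abbrev ExtGrp (R : Type) [CommRing R] (M N : Type) [AddCommGroup M] [Module R M]
    [AddCommGroup N] [Module R N] (i : ℕ) : Type :=
  ((Ext R (ModuleCat R) i).obj (Opposite.op (ModuleCat.of R M))).obj (ModuleCat.of R N)

/-- G-dimension zero. -/
def GDimZero (R : Type) [CommRing R] (M : Type) [AddCommGroup M] [Module R M] : Prop :=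
  Function.Bijective (Module.Dual.eval R M) ∧
  (∀ i : ℕ, 0 < i → Subsingleton (ExtGrp R M R i)) ∧
  (∀ i : ℕ, 0 < i → Subsingleton (ExtGrp R (Module.Dual R M) R i))

/-- finite self-injective dimension -/
def HasFiniteSelfInjDim (R : Type) [CommRing R] : Prop :=
  ∃ n : ℕ, ∀ (N : ModuleCat R) (i : ℕ), n < i →
    Subsingleton (((Ext R (ModuleCat R) i).obj (Opposite.op N)).obj (ModuleCat.of R R))

/-- Gorenstein local ring -/
def IsGorensteinLocalRing (R : Type) [CommRing R] : Prop :=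
  IsNoetherianRing R ∧ IsLocalRing R ∧ HasFiniteSelfInjDim R

/-- length of a module, as Krull dimension of its submodule lattice -/
noncomputable def mlength (R : Type) [CommRing R] (M : Type) [AddCommGroup M] [Module R M] :
    WithBot ℕ∞ :=
  Order.krullDim (Submodule R M)

/-- A standard graded (homogeneous) algebra over a field: the degree-0 part is k,
the algebra is generated in degree 1, and all graded pieces are finite dimensional. -/
def IsStandardGraded (k S : Type) [Field k] [CommRing S] [Algebra k S]
    (𝒮 : ℕ → Submodule k S) [GradedAlgebra 𝒮] : Prop :=
  𝒮 0 = (1 : Submodule k S) ∧ Algebra.adjoin k ((𝒮 1 : Set S)) = ⊤ ∧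
    ∀ n, FiniteDimensional k ↥(𝒮 n)

/-- `GDimLE R n M` : the G-dimension of `M` over `R` is at most `n`,
i.e. an `n`-th syzygy of `M` has G-dimension zero. -/
def GDimLE (R : Type) [CommRing R] : ℕ → ∀ (M : Type) [AddCommGroup M] [Module R M], Prop
  | 0, M, _, _ => GDimZero R M
  | n + 1, M, _, _ => ∃ (b : ℕ) (π : (Fin b → R) →ₗ[R] M),
      Function.Surjective π ∧ GDimLE R n ↥(LinearMap.ker π)

/-- `ProjDimLE S n M` : the projective dimension of `M` over `S` is at most `n`. -/
def ProjDimLE (S : Type) [CommRing S] : ℕ → ∀ (M : Type) [AddCommGroup M] [Module S M], Prop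
  | 0, M, _, _ => Module.Projective S M
  | n + 1, M, _, _ => ∃ (b : ℕ) (π : (Fin b → S) →ₗ[S] M),
      Function.Surjective π ∧ ProjDimLE S n ↥(LinearMap.ker π)


section ExactZD
variable {R : Type} [CommRing R]

noncomputable def mulM (r : R) : ModuleCat.of R R ⟶ ModuleCat.of R R :=
  ModuleCat.ofHom (LinearMap.lsmul R R r)

lemma mulM_apply (r s : R) : mulM (R := R) r s = r * s := rfl

def altc (a b : R) : ℕ → R := fun n => if Even n then a else b

lemma altc_mul_succ (a b : R) (hab : a * b = 0) (n : ℕ) :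
    altc a b n * altc a b (n+1) = 0 := by
  rcases Nat.even_or_odd n with h | h
  · simp [altc, h, Nat.not_even_iff_odd.2 (Even.add_one h), hab]
  · simp [altc, Nat.not_even_iff_odd.2 h, Nat.even_add_one, hab, mul_comm b a]

lemma altc_ann (a b : R) (ha : ∀ r, a * r = 0 → ∃ s, r = b * s)
    (hb : ∀ r, b * r = 0 → ∃ s, r = a * s) (n : ℕ) (r : R)
    (h : altc a b (n+1) * r = 0) : ∃ s, r = altc a b n * s := by
  rcases Nat.even_or_odd n with he | he
  · have h1 : ¬ Even (n+1) := by simpa [Nat.even_add_one] using he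
    simp only [altc, if_pos he, if_neg h1] at *
    exact hb r h
  · have h1 : ¬ Even n := Nat.not_even_iff_odd.2 he
    have h2 : Even (n+1) := Nat.even_add_one.2 h1
    simp only [altc, if_pos h2, if_neg h1] at *
    exact ha r h

noncomputable def perComplex (a b : R) (hab : a * b = 0) : ChainComplex (ModuleCat R) ℕ :=
  ChainComplex.of (fun _ => ModuleCat.of R R) (fun n => mulM (altc a b n))
    (fun n => by
      refine ModuleCat.hom_ext (LinearMap.ext fun r => ?_)
      show mulM (altc a b n) (mulM (altc a b (n+1)) r) = (0 : ModuleCat.of R R ⟶ ModuleCat.of R R) r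
      rw [mulM_apply, mulM_apply, ← mul_assoc, altc_mul_succ a b hab n, zero_mul]; rfl)

lemma perComplex_d (a b : R) (hab : a * b = 0) (n : ℕ) :
    (perComplex a b hab).d (n+1) n = mulM (altc a b n) := by
  simp [perComplex]

lemma perComplex_X (a b : R) (hab : a * b = 0) (n : ℕ) :
    (perComplex a b hab).X n = ModuleCat.of R R := rfl

end ExactZD


lemma altc_succ_succ {R : Type} [CommRing R] (a b : R) (n : ℕ) :
    altc a b (n+2) = altc a b n := by
  simp [altc, Nat.even_add_one, -Nat.not_even_iff_odd]

section Res
variable {R : Type} [CommRing R]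

lemma perComplex_exactAt_succ (a b : R) (hab : a * b = 0)
    (ha : ∀ r, a * r = 0 → ∃ s, r = b * s) (hb : ∀ r, b * r = 0 → ∃ s, r = a * s)
    (n : ℕ) : (perComplex a b hab).ExactAt (n+1) := by
  rw [HomologicalComplex.exactAt_iff' _ (n+2) (n+1) n (by simp) (by simp),
    ShortComplex.moduleCat_exact_iff]
  intro x hx
  have hx2 : (perComplex a b hab).d (n+1) n x = 0 := hx
  rw [perComplex_d a b hab n] at hx2
  have hx' : altc a b n * (id (α := R) x) = 0 := hx2
  have h2 : altc a b (n+2) * (id (α := R) x) = 0 := by rwa [altc_succ_succ]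
  obtain ⟨s, hs⟩ := altc_ann a b ha hb (n+1) (id (α := R) x) h2
  refine ⟨s, ?_⟩
  show (perComplex a b hab).d (n+2) (n+1) s = x
  rw [perComplex_d a b hab (n+1)]
  exact hs.symm

noncomputable def perRes (a b : R) (hab : a * b = 0)
    (ha : ∀ r, a * r = 0 → ∃ s, r = b * s) (hb : ∀ r, b * r = 0 → ∃ s, r = a * s) :
    ProjectiveResolution (ModuleCat.of R (R ⧸ Ideal.span {a})) where
  complex := perComplex a b hab
  projective n := ModuleCat.projective_of_free (Module.Basis.singleton PUnit.{1} R)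
  π := (ChainComplex.toSingle₀Equiv _ _).symm
    ⟨ModuleCat.ofHom (Submodule.mkQ (Ideal.span {a})), by
      rw [perComplex_d a b hab 0, show altc a b 0 = a from if_pos ⟨0, rfl⟩]
      refine ModuleCat.hom_ext (LinearMap.ext fun r => ?_)
      show Submodule.mkQ (Ideal.span {a}) (a * (id (α := R) r)) = 0
      rw [Submodule.mkQ_apply, Submodule.Quotient.mk_eq_zero]
      exact Ideal.mul_mem_right _ _ (Ideal.mem_span_singleton_self a)⟩
  quasiIso := ⟨fun n => by
    cases n with
    | zero =>
      rw [ChainComplex.quasiIsoAt₀_iff, ShortComplex.quasiIso_iff_of_zeros']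
      · constructor
        · rw [ShortComplex.moduleCat_exact_iff]
          intro x hx
          have hx2 : Submodule.mkQ (Ideal.span {a}) (id (α := R) x) = 0 := hx
          rw [Submodule.mkQ_apply, Submodule.Quotient.mk_eq_zero] at hx2
          obtain ⟨s, hs⟩ := Ideal.mem_span_singleton'.1 hx2
          refine ⟨s, ?_⟩
          show (perComplex a b hab).d 1 0 s = x
          rw [perComplex_d a b hab 0, show altc a b 0 = a from if_pos ⟨0, rfl⟩]
          show a * s = id (α := R) x
          rw [mul_comm]; exact hs
        · rw [ModuleCat.epi_iff_surjective]
          exact fun m => Quotient.inductionOn' m (fun r => ⟨r, rfl⟩)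
      all_goals rfl
    | succ n =>
      rw [quasiIsoAt_iff_exactAt']
      · exact perComplex_exactAt_succ a b hab ha hb n
      · apply ChainComplex.exactAt_succ_single_obj⟩

end Res

section ExtVanish
open CategoryTheory Limits
variable {R : Type} [CommRing R]

lemma subsingleton_of_isZero {X : ModuleCat R} (h : IsZero X) : Subsingleton X := by
  have hid : (𝟙 X : X ⟶ X) = 0 := (IsZero.iff_id_eq_zero X).1 h
  constructor
  intro m n
  have h1 : (𝟙 X : X ⟶ X) m = (0 : X ⟶ X) m := by rw [hid]
  have h2 : (𝟙 X : X ⟶ X) n = (0 : X ⟶ X) n := by rw [hid]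
  have : m = (0 : X) := h1
  have : n = (0 : X) := h2
  simp_all

lemma lin_helper (a' b' : R) (ha' : ∀ r, a' * r = 0 → ∃ s, r = b' * s)
    (φ : R →ₗ[R] R) (hφ : φ.comp (LinearMap.lsmul R R a') = 0) :
    ∃ s : R, (LinearMap.lsmul R R s).comp (LinearMap.lsmul R R b') = φ := by
  have h1 : a' * φ 1 = 0 := by
    have h := LinearMap.congr_fun hφ (1 : R)
    simp only [LinearMap.comp_apply, LinearMap.lsmul_apply, LinearMap.zero_apply,
      smul_eq_mul, mul_one] at h
    calc a' * φ 1 = φ (a' • 1) := by rw [map_smul, smul_eq_mul]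
      _ = 0 := by rw [smul_eq_mul, mul_one]; exact h
  obtain ⟨s, hs⟩ := ha' _ h1
  refine ⟨s, ?_⟩
  ext
  simp only [LinearMap.comp_apply, LinearMap.lsmul_apply, smul_eq_mul, mul_one]
  rw [hs]
  ring

lemma homComplex_exactAt (a b : R) (hab : a * b = 0)
    (ha : ∀ r, a * r = 0 → ∃ s, r = b * s) (hb : ∀ r, b * r = 0 → ∃ s, r = a * s)
    (n : ℕ) :
    ((perComplex a b hab).linearYonedaObj R (ModuleCat.of R R)).ExactAt (n+1) := by
  have haltc : ∀ m r, altc a b (m+1) * r = 0 → ∃ s, r = altc a b m * s :=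
    altc_ann a b ha hb
  rw [HomologicalComplex.exactAt_iff' _ n (n+1) (n+2) (by simp) (by simp),
    ShortComplex.moduleCat_exact_iff]
  intro φ hφ
  have e1 : (((perComplex a b hab).linearYonedaObj R (ModuleCat.of R R)).d (n+1) (n+2)) φ =
      (perComplex a b hab).d (n+2) (n+1) ≫
        (id (α := ((perComplex a b hab).X (n+1) ⟶ ModuleCat.of R R)) φ) := rfl
  rw [perComplex_d a b hab (n+1)] at e1
  have hφ3 : mulM (altc a b (n+1)) ≫
      (id (α := ((perComplex a b hab).X (n+1) ⟶ ModuleCat.of R R)) φ) = 0 :=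
    e1.symm.trans hφ
  have hφ4 : (id (α := ((perComplex a b hab).X (n+1) ⟶ ModuleCat.of R R)) φ).hom.comp
      (LinearMap.lsmul R R (altc a b (n+1))) = 0 := by
    have := congrArg ModuleCat.Hom.hom hφ3
    exact this
  obtain ⟨s, hkey⟩ := lin_helper (altc a b (n+1)) (altc a b n) (haltc n)
    (id (α := ((perComplex a b hab).X (n+1) ⟶ ModuleCat.of R R)) φ).hom hφ4
  refine ⟨mulM s, ?_⟩
  have e2 : ((HomologicalComplex.sc'
      ((perComplex a b hab).linearYonedaObj R (ModuleCat.of R R)) n (n+1) (n+2)).f) (mulM s) =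
      ((perComplex a b hab).d (n+1) n ≫ mulM s :
        ((perComplex a b hab).X (n+1) ⟶ ModuleCat.of R R)) := rfl
  rw [perComplex_d a b hab n] at e2
  exact e2.trans (ModuleCat.hom_ext hkey)

end ExtVanish

section DualSec
variable {R : Type} [CommRing R]

/-- the pairing functional -/
noncomputable def sigPhi (a b : R) (hab : a * b = 0) : R →ₗ[R] ((R ⧸ Ideal.span {a}) →ₗ[R] R) where
  toFun s := Submodule.liftQ _ (LinearMap.toSpanSingleton R R (b*s)) (by
    intro r hr
    obtain ⟨c, hc⟩ := Ideal.mem_span_singleton'.1 hr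
    simp only [LinearMap.mem_ker, LinearMap.toSpanSingleton_apply, smul_eq_mul]
    rw [← hc]; rw [show c * a * (b * s) = c * s * (a * b) by ring, hab, mul_zero])
  map_add' s t := by
    apply Submodule.linearMap_qext
    apply LinearMap.ext
    intro r
    show r * (b * (s + t)) = r * (b * s) + r * (b * t)
    ring
  map_smul' c s := by
    apply Submodule.linearMap_qext
    apply LinearMap.ext
    intro r
    show r * (b * (c * s)) = c * (r * (b * s))
    ring

lemma sigPhi_apply (a b : R) (hab : a * b = 0) (s r : R) :
    sigPhi a b hab s (Submodule.Quotient.mk r) = r * (b * s) := rfl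

/-- σ : R/(a) → Dual(R/(a)) -/
noncomputable def sigMap (a b : R) (hab : a * b = 0) :
    (R ⧸ Ideal.span {a}) →ₗ[R] Module.Dual R (R ⧸ Ideal.span {a}) :=
  Submodule.liftQ _ (sigPhi a b hab) (by
    intro s hs
    obtain ⟨c, hc⟩ := Ideal.mem_span_singleton'.1 hs
    simp only [LinearMap.mem_ker]
    apply LinearMap.ext
    intro m
    induction m using Quotient.inductionOn' with
    | h r =>
      show sigPhi a b hab s (Submodule.Quotient.mk r) = 0
      rw [sigPhi_apply, ← hc, show r * (b * (c * a)) = r * c * (a * b) by ring, hab, mul_zero])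

lemma sigMap_apply (a b : R) (hab : a * b = 0) (s r : R) :
    sigMap a b hab (Submodule.Quotient.mk s) (Submodule.Quotient.mk r) = r * (b * s) := by
  show sigPhi a b hab s (Submodule.Quotient.mk r) = r * (b * s)
  exact sigPhi_apply a b hab s r

lemma sigMap_symmetric (a b : R) (hab : a * b = 0) (m m' : R ⧸ Ideal.span {a}) :
    sigMap a b hab m m' = sigMap a b hab m' m := by
  induction m using Quotient.inductionOn' with
  | h s =>
    induction m' using Quotient.inductionOn' with
    | h r =>
      show sigMap a b hab (Submodule.Quotient.mk s) (Submodule.Quotient.mk r) =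
        sigMap a b hab (Submodule.Quotient.mk r) (Submodule.Quotient.mk s)
      rw [sigMap_apply, sigMap_apply]
      ring

lemma sigMap_bijective (a b : R) (hab : a * b = 0)
    (ha : ∀ r, a * r = 0 → ∃ s, r = b * s) (hb : ∀ r, b * r = 0 → ∃ s, r = a * s) :
    Function.Bijective (sigMap a b hab) := by
  constructor
  · rw [injective_iff_map_eq_zero]
    intro m hm
    induction m using Quotient.inductionOn' with
    | h s =>
      have hm' : sigMap a b hab (Submodule.Quotient.mk s) = 0 := hm
      have h1 : sigMap a b hab (Submodule.Quotient.mk s) (Submodule.Quotient.mk 1) = 0 := by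
        rw [hm']; rfl
      rw [sigMap_apply, one_mul] at h1
      obtain ⟨u, hu⟩ := hb s h1
      show Submodule.Quotient.mk s = 0
      rw [Submodule.Quotient.mk_eq_zero]
      exact Ideal.mem_span_singleton'.2 ⟨u, by rw [hu, mul_comm]⟩
  · intro ψ
    have h0 : a * ψ (Submodule.Quotient.mk 1) = 0 := by
      have h1 : (Submodule.Quotient.mk (a * 1) : R ⧸ Ideal.span {a}) = 0 := by
        rw [Submodule.Quotient.mk_eq_zero]
        exact Ideal.mul_mem_right 1 _ (Ideal.mem_span_singleton_self a)
      calc a * ψ (Submodule.Quotient.mk 1)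
          = ψ (a • Submodule.Quotient.mk (1:R)) := by rw [map_smul]; rfl
        _ = ψ (Submodule.Quotient.mk (a * 1)) := rfl
        _ = 0 := by rw [h1, map_zero]
    obtain ⟨u, hu⟩ := ha _ h0
    refine ⟨Submodule.Quotient.mk u, ?_⟩
    apply LinearMap.ext
    intro m
    induction m using Quotient.inductionOn' with
    | h r =>
      show sigMap a b hab (Submodule.Quotient.mk u) (Submodule.Quotient.mk r) = ψ (Submodule.Quotient.mk r)
      rw [sigMap_apply, ← hu]
      calc r * ψ (Submodule.Quotient.mk 1)
          = ψ (r • Submodule.Quotient.mk (1:R)) := by rw [map_smul]; rfl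
        _ = ψ (Submodule.Quotient.mk (r * 1)) := rfl
        _ = ψ (Submodule.Quotient.mk r) := by rw [mul_one]

noncomputable def sigEquiv (a b : R) (hab : a * b = 0)
    (ha : ∀ r, a * r = 0 → ∃ s, r = b * s) (hb : ∀ r, b * r = 0 → ∃ s, r = a * s) :
    (R ⧸ Ideal.span {a}) ≃ₗ[R] Module.Dual R (R ⧸ Ideal.span {a}) :=
  LinearEquiv.ofBijective _ (sigMap_bijective a b hab ha hb)

lemma eval_bijective_of_ezd (a b : R) (hab : a * b = 0)
    (ha : ∀ r, a * r = 0 → ∃ s, r = b * s) (hb : ∀ r, b * r = 0 → ∃ s, r = a * s) :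
    Function.Bijective (Module.Dual.eval R (R ⧸ Ideal.span {a})) := by
  set σe := sigEquiv a b hab ha hb
  have hcomp : ∀ m, σe.dualMap (Module.Dual.eval R (R ⧸ Ideal.span {a}) m) = σe m := by
    intro m
    apply LinearMap.ext
    intro m'
    show Module.Dual.eval R _ m (σe m') = _
    rw [Module.Dual.eval_apply]
    exact (sigMap_symmetric a b hab m' m)
  have heq : ⇑(Module.Dual.eval R (R ⧸ Ideal.span {a})) = ⇑σe.dualMap.symm ∘ ⇑σe := by
    funext m
    rw [Function.comp_apply, ← hcomp m, LinearEquiv.symm_apply_apply]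
  rw [heq]
  exact σe.dualMap.symm.bijective.comp σe.bijective

lemma notFree_of_ezd (a : R) (h1 : (1:R) ∉ Ideal.span {a}) (ha0 : a ≠ 0) :
    ¬ Module.Free R (R ⧸ Ideal.span {a}) := by
  intro hF
  have hnt : Nontrivial (R ⧸ Ideal.span {a}) := by
    refine ⟨Submodule.Quotient.mk 1, 0, ?_⟩
    rw [ne_eq, Submodule.Quotient.mk_eq_zero]
    exact h1
  let B := Module.Free.chooseBasis R (R ⧸ Ideal.span {a})
  obtain ⟨i⟩ := B.index_nonempty
  have hann : a • B i = 0 := by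
    induction (B i) using Quotient.inductionOn' with
    | h r =>
      show (Submodule.Quotient.mk (a * r) : R ⧸ Ideal.span {a}) = 0
      rw [Submodule.Quotient.mk_eq_zero]
      exact Ideal.mul_mem_right r _ (Ideal.mem_span_singleton_self a)
  have hrepr := congrArg B.repr hann
  rw [map_smul, map_zero, B.repr_self] at hrepr
  exact ha0 (by simpa [Finsupp.smul_single, Finsupp.single_eq_zero] using hrepr)

end DualSec

section ExtAssemble
open CategoryTheory Limits
variable {R : Type} [CommRing R]

lemma subsingleton_moduleCat_of_iso {X Y : ModuleCat R} (e : X ≅ Y) (h : Subsingleton Y) :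
    Subsingleton X := by
  constructor
  intro m n
  have hm : e.inv (e.hom m) = m := by
    have := ConcreteCategory.congr_hom e.hom_inv_id m
    exact this
  have hn : e.inv (e.hom n) = n := by
    have := ConcreteCategory.congr_hom e.hom_inv_id n
    exact this
  rw [← hm, ← hn, Subsingleton.elim (e.hom m) (e.hom n)]

lemma ext_subsingleton_of_iso {A B : ModuleCat R} (e : A ≅ B) (i : ℕ)
    (h : Subsingleton (((Ext R (ModuleCat R) i).obj (Opposite.op B)).obj (ModuleCat.of R R))) :
    Subsingleton (((Ext R (ModuleCat R) i).obj (Opposite.op A)).obj (ModuleCat.of R R)) :=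
  subsingleton_moduleCat_of_iso
    ((((Ext R (ModuleCat R) i).mapIso e.op).app (ModuleCat.of R R)).symm) h

lemma ext_vanish_of_ezd (a b : R) (hab : a * b = 0)
    (ha : ∀ r, a * r = 0 → ∃ s, r = b * s) (hb : ∀ r, b * r = 0 → ∃ s, r = a * s)
    (i : ℕ) (hi : 0 < i) :
    Subsingleton (((Ext R (ModuleCat R) i).obj
      (Opposite.op (ModuleCat.of R (R ⧸ Ideal.span {a})))).obj (ModuleCat.of R R)) := by
  obtain ⟨n, rfl⟩ : ∃ n, i = n + 1 := ⟨i - 1, by omega⟩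
  have e : ((Ext R (ModuleCat R) (n+1)).obj
      (Opposite.op (ModuleCat.of R (R ⧸ Ideal.span {a})))).obj (ModuleCat.of R R) ≅
      ((perComplex a b hab).linearYonedaObj R (ModuleCat.of R R)).homology (n+1) :=
    (perRes a b hab ha hb).isoExt (n+1) (ModuleCat.of R R)
  have hz : IsZero (((perComplex a b hab).linearYonedaObj R (ModuleCat.of R R)).homology (n+1)) := by
    rw [← HomologicalComplex.exactAt_iff_isZero_homology]
    exact homComplex_exactAt a b hab ha hb n
  exact subsingleton_moduleCat_of_iso e (subsingleton_of_isZero hz)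

end ExtAssemble

section GD
lemma gdimzero_of_ezd {R : Type} [CommRing R] (a b : R) (hab : a * b = 0)
    (ha : ∀ r, a * r = 0 → ∃ s, r = b * s) (hb : ∀ r, b * r = 0 → ∃ s, r = a * s) :
    GDimZero R (R ⧸ Ideal.span {a}) := by
  refine ⟨eval_bijective_of_ezd a b hab ha hb,
    fun i hi => ext_vanish_of_ezd a b hab ha hb i hi, fun i hi => ?_⟩
  exact ext_subsingleton_of_iso ((sigEquiv a b hab ha hb).symm.toModuleIso) i
    (ext_vanish_of_ezd a b hab ha hb i hi)
end GD

/-- if S is a non-Gorenstein one-dimensional CM standard graded algebra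
with minimal multiplicity and f is a degree-2 homogeneous nonzerodivisor, then
R = S/fS possesses a nonfree finitely generated module of G-dimension zero. -/
theorem stmt_16 (k S : Type) [Field k] [CommRing S] [Algebra k S]
    (𝒮 : ℕ → Submodule k S) [GradedAlgebra 𝒮] (hSG : IsStandardGraded k S 𝒮)
    (hdim : ringKrullDim S = 1)
    (hMM : ∃ x ∈ 𝒮 1, x ∈ nonZeroDivisors S ∧
      Ideal.span {x} * (HomogeneousIdeal.irrelevant 𝒮).toIdeal =
        (HomogeneousIdeal.irrelevant 𝒮).toIdeal ^ 2)
    (hng : ¬ HasFiniteSelfInjDim S)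
    (f : S) (hf2 : f ∈ 𝒮 2) (hfnzd : f ∈ nonZeroDivisors S) :
    ∃ M : ModuleCat (S ⧸ Ideal.span {f}),
      Module.Finite (S ⧸ Ideal.span {f}) M ∧
      GDimZero (S ⧸ Ideal.span {f}) M ∧
      ¬ Module.Free (S ⧸ Ideal.span {f}) M := by
  -- S is nontrivial
  have hSnt : Nontrivial S := by
    by_contra h
    rw [not_nontrivial_iff_subsingleton] at h
    rw [ringKrullDim_eq_bot_of_subsingleton] at hdim
    simp at hdim
  obtain ⟨x, hx1, hxnzd, hxm⟩ := hMM
  set m := (HomogeneousIdeal.irrelevant 𝒮).toIdeal with hm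
  have hsub : ∀ (n : ℕ) (z : S), z ∈ 𝒮 (n+1) → z ∈ m := by
    intro n z hz
    show z ∈ HomogeneousIdeal.irrelevant 𝒮
    rw [HomogeneousIdeal.mem_irrelevant_iff]
    show ((DirectSum.decompose 𝒮 z 0 : 𝒮 0) : S) = 0
    exact DirectSum.decompose_of_mem_ne 𝒮 hz (by omega)
  -- f ∈ m ^ 2
  have hf_m2 : f ∈ m ^ 2 := by
    have hftop : f ∈ Submodule.span k ((Submonoid.closure (𝒮 1 : Set S) : Set S)) := by
      have h2 : f ∈ Subalgebra.toSubmodule (Algebra.adjoin k ((𝒮 1 : Set S))) := by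
        rw [hSG.2.1]; trivial
      rwa [Algebra.adjoin_eq_span] at h2
    have key : GradedAlgebra.proj 𝒮 2 f ∈ m ^ 2 := by
      refine Submodule.span_induction
        (p := fun z _ => GradedAlgebra.proj 𝒮 2 z ∈ m ^ 2) ?_ ?_ ?_ ?_ hftop
      · -- words
        intro w hw
        have hword : ∃ n, w ∈ 𝒮 n ∧ (n = 2 → w ∈ m ^ 2) := by
          refine Submonoid.closure_induction
            (motive := fun w _ => ∃ n, w ∈ 𝒮 n ∧ (n = 2 → w ∈ m ^ 2)) ?_ ?_ ?_ hw
          · intro z hz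
            exact ⟨1, hz, by omega⟩
          · exact ⟨0, SetLike.one_mem_graded 𝒮, by omega⟩
          · rintro z z' _ _ ⟨n, hzn, hz2⟩ ⟨n', hzn', hz2'⟩
            refine ⟨n + n', SetLike.mul_mem_graded hzn hzn', ?_⟩
            intro hnn
            have hcases : (n = 0 ∧ n' = 2) ∨ (n = 1 ∧ n' = 1) ∨ (n = 2 ∧ n' = 0) := by omega
            rcases hcases with ⟨h0, h2'⟩ | ⟨h1', h1''⟩ | ⟨h2'', h0'⟩
            · exact Ideal.mul_mem_left _ _ (hz2' h2')
            · subst h1'; subst h1''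
              rw [pow_two]
              exact Ideal.mul_mem_mul (hsub 0 z hzn) (hsub 0 z' hzn')
            · exact Ideal.mul_mem_right _ _ (hz2 h2'')
        obtain ⟨n, hwn, hw2⟩ := hword
        by_cases hn : n = 2
        · rw [GradedAlgebra.proj_apply,
            DirectSum.decompose_of_mem_same 𝒮 (hn ▸ hwn)]
          exact hw2 hn
        · rw [GradedAlgebra.proj_apply, DirectSum.decompose_of_mem_ne 𝒮 hwn hn]
          exact Ideal.zero_mem _
      · show GradedAlgebra.proj 𝒮 2 (0 : S) ∈ m ^ 2
        rw [map_zero]; exact Ideal.zero_mem _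
      · intro z z' _ _ hz hz'
        show GradedAlgebra.proj 𝒮 2 (z + z') ∈ m ^ 2
        rw [map_add]; exact Ideal.add_mem _ hz hz'
      · intro c z _ hz
        show GradedAlgebra.proj 𝒮 2 (c • z) ∈ m ^ 2
        rw [map_smul, Algebra.smul_def]
        exact Ideal.mul_mem_left _ _ hz
    rwa [GradedAlgebra.proj_apply, DirectSum.decompose_of_mem_same 𝒮 hf2] at key
  -- f = x * y with y ∈ 𝒮 1
  have hfxm : f ∈ Ideal.span {x} * m := by rw [hxm]; exact hf_m2
  obtain ⟨z, hzm, hxz⟩ := Ideal.mem_span_singleton_mul.1 hfxm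
  set y : S := GradedAlgebra.proj 𝒮 1 z with hy
  have hy1 : y ∈ 𝒮 1 := by
    rw [hy, GradedAlgebra.proj_apply]
    exact SetLike.coe_mem _
  have hfxy : f = x * y := by
    have h2 : (DirectSum.decompose 𝒮 (x * z) (1+1) : S) =
        x * (DirectSum.decompose 𝒮 z 1 : S) :=
      DirectSum.coe_decompose_mul_add_of_left_mem (𝒜 := 𝒮) (i := 1) (j := 1) hx1
    calc f = (DirectSum.decompose 𝒮 f 2 : S) :=
          (DirectSum.decompose_of_mem_same 𝒮 hf2).symm
      _ = (DirectSum.decompose 𝒮 (x * z) 2 : S) := by rw [hxz]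
      _ = x * y := by
          rw [show (2:ℕ) = 1+1 from rfl, h2, hy, GradedAlgebra.proj_apply]
  have hx0 : x ≠ 0 := by
    intro h
    have := (mem_nonZeroDivisors_iff.1 hxnzd).2 1 (by rw [h, mul_zero])
    exact one_ne_zero this
  have hynzd : ∀ s : S, s * y = 0 → s = 0 := by
    intro s hs
    have : s * f = 0 := by rw [hfxy, show s * (x * y) = (s * y) * x by ring, hs, zero_mul]
    exact (mem_nonZeroDivisors_iff.1 hfnzd).2 s this
  -- pass to R = S/(f)
  set Q := Ideal.Quotient.mk (Ideal.span {f}) with hQ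
  set A : S ⧸ Ideal.span {f} := Q x with hA
  set B : S ⧸ Ideal.span {f} := Q y with hB
  have hab : A * B = 0 := by
    rw [hA, hB, ← map_mul, ← hfxy, Ideal.Quotient.eq_zero_iff_mem]
    exact Ideal.mem_span_singleton_self f
  have ha : ∀ r, A * r = 0 → ∃ s, r = B * s := by
    intro r hr
    obtain ⟨r', rfl⟩ := Ideal.Quotient.mk_surjective r
    rw [hA, ← map_mul, Ideal.Quotient.eq_zero_iff_mem, Ideal.mem_span_singleton'] at hr
    obtain ⟨c, hc⟩ := hr
    have hxx : (y * c - r') * x = 0 := by linear_combination hc - c * hfxy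
    have hr' : y * c = r' := sub_eq_zero.1 ((mem_nonZeroDivisors_iff.1 hxnzd).2 _ hxx)
    exact ⟨Q c, by rw [hB, ← map_mul, ← hr']⟩
  have hb : ∀ r, B * r = 0 → ∃ s, r = A * s := by
    intro r hr
    obtain ⟨r', rfl⟩ := Ideal.Quotient.mk_surjective r
    rw [hB, ← map_mul, Ideal.Quotient.eq_zero_iff_mem, Ideal.mem_span_singleton'] at hr
    obtain ⟨c, hc⟩ := hr
    have hxx : (x * c - r') * y = 0 := by linear_combination hc - c * hfxy
    have hr' : x * c = r' := sub_eq_zero.1 (hynzd _ hxx)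
    exact ⟨Q c, by rw [hA, ← map_mul, ← hr']⟩
  -- A ≠ 0
  have hA0 : A ≠ 0 := by
    intro h
    rw [hA, Ideal.Quotient.eq_zero_iff_mem, Ideal.mem_span_singleton'] at h
    obtain ⟨c, hc⟩ := h
    have e1 : GradedAlgebra.proj 𝒮 1 (c * f) = 0 := by
      rw [GradedAlgebra.proj_apply]
      exact DirectSum.coe_decompose_mul_of_right_mem_of_not_le (𝒜 := 𝒮) hf2 (by omega)
    have e2 := congrArg (GradedAlgebra.proj 𝒮 1) hc
    rw [e1, GradedAlgebra.proj_apply, DirectSum.decompose_of_mem_same 𝒮 hx1] at e2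
    exact hx0 e2.symm
  -- 1 ∉ span {A}
  have h1A : (1 : S ⧸ Ideal.span {f}) ∉ Ideal.span {A} := by
    intro h
    rw [Ideal.mem_span_singleton'] at h
    obtain ⟨u, hu⟩ := h
    obtain ⟨u', rfl⟩ := Ideal.Quotient.mk_surjective u
    rw [hA, ← map_mul, show (1 : S ⧸ Ideal.span {f}) = Q 1 by rw [hQ]; rfl,
      Ideal.Quotient.mk_eq_mk_iff_sub_mem] at hu
    rw [Ideal.mem_span_singleton'] at hu
    obtain ⟨c, hc⟩ := hu
    have e1 : GradedAlgebra.proj 𝒮 0 (c * f) = 0 := by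
      rw [GradedAlgebra.proj_apply]
      exact DirectSum.coe_decompose_mul_of_right_mem_of_not_le (𝒜 := 𝒮) hf2 (by omega)
    have e2 : GradedAlgebra.proj 𝒮 0 (u' * x) = 0 := by
      rw [GradedAlgebra.proj_apply]
      exact DirectSum.coe_decompose_mul_of_right_mem_of_not_le (𝒜 := 𝒮) hx1 (by omega)
    have e4 : GradedAlgebra.proj 𝒮 0 (1 : S) = 1 := by
      rw [GradedAlgebra.proj_apply]
      exact DirectSum.decompose_of_mem_same 𝒮 (SetLike.one_mem_graded 𝒮)
    have e5 := congrArg (GradedAlgebra.proj 𝒮 0) hc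
    rw [map_sub, e1, e2, e4] at e5
    have h10 : (1 : S) = 0 := by linear_combination e5
    exact one_ne_zero h10
  -- assemble
  refine ⟨ModuleCat.of _ ((S ⧸ Ideal.span {f}) ⧸ Ideal.span {A}), ?_, ?_, ?_⟩
  · exact Module.Finite.of_surjective (Submodule.mkQ (Ideal.span {A}))
      (Submodule.Quotient.mk_surjective _)
  · exact gdimzero_of_ezd A B hab ha hb
  · exact notFree_of_ezd A h1A hA0
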